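/- For all sufficiently large real n, setting x = n / ln(n / ln n) satisfies n < x * ln x + x; hence x overestimates the solution of n = x + x ln x. -/
import Mathlib


open Real

theorem stmt_2 :
    ∃ N : ℝ, ∀ n : ℝ, N ≤ n →
      let x := n / Real.log (n / Real.log n)
      n < x * Real.log x + x := by
  refine ⟨3, fun n hn => ?_⟩
  intro x
  have hn0 : (0:ℝ) < n := by linarith
  have hln1 : 1 ≤ Real.log n := by
    rw [Real.le_log_iff_exp_le hn0]
    have := Real.exp_one_lt_d9
    linarith
  have hlogpos : (0:ℝ) < Real.log n := by linarith
  have hll : 0 ≤ Real.log (Real.log n) := Real.log_nonneg hln1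
  have hL : Real.log (n / Real.log n) = Real.log n - Real.log (Real.log n) :=
    Real.log_div hn0.ne' hlogpos.ne'
  have hLlt : Real.log (Real.log n) < Real.log n := by
    have := Real.log_le_sub_one_of_pos hlogpos
    linarith
  have hLpos : 0 < Real.log (n / Real.log n) := by rw [hL]; linarith
  have hxpos : 0 < x := div_pos hn0 hLpos
  have hlogx : Real.log x = Real.log n - Real.log (Real.log (n / Real.log n)) :=
    Real.log_div hn0.ne' hLpos.ne'
  have hLle : Real.log (n / Real.log n) ≤ Real.log n := by rw [hL]; linarith
  have hlogL : Real.log (Real.log (n / Real.log n)) ≤ Real.log (Real.log n) :=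
    Real.log_le_log hLpos hLle
  rw [hL] at hlogL
  have key : Real.log (n / Real.log n) < Real.log x + 1 := by
    rw [hlogx, hL]; linarith
  have hxL : x * Real.log (n / Real.log n) = n := div_mul_cancel₀ n hLpos.ne'
  calc n = x * Real.log (n / Real.log n) := hxL.symm
    _ < x * (Real.log x + 1) := by
        exact mul_lt_mul_of_pos_left key hxpos
    _ = x * Real.log x + x := by ring
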